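/- No unbiased estimator of the one-dimensional FID to a fixed Gaussian exists on classes containing two-component Gaussian mixtures: for P_α = (1−α)N(μ₀,σ₀²) + αN(μ₁,σ₁²) with (μ₀,σ₀²) ≠ (μ₁,σ₁²), the mean μ_α of P_α is affine in α and its variance σ_α² is a quadratic polynomial in α; consequently α ↦ FID(P_α, N(μ,σ²)) = (μ_α − μ)² + σ_α² + σ² − 2σ σ_α is not a polynomial in α (since σ_α = √(quadratic) is not polynomial unless the mixture is trivial), whereas any unbiased estimator based on n samples would make this map a polynomial of degree ≤ n. -/

import Mathlib

open MeasureTheory ProbabilityTheory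

/-- The two-component Gaussian mixture `(1-α)N(μ₀,σ₀²) + αN(μ₁,σ₁²)` on `ℝ`. -/
noncomputable def gaussMix (μ₀ σ₀ μ₁ σ₁ α : ℝ) : Measure ℝ :=
  ENNReal.ofReal (1 - α) • gaussianReal μ₀ (σ₀ ^ 2).toNNReal
    + ENNReal.ofReal α • gaussianReal μ₁ (σ₁ ^ 2).toNNReal

/-- The mean of the mixture, affine in `α`. -/
noncomputable def mixMean (μ₀ μ₁ α : ℝ) : ℝ := (1 - α) * μ₀ + α * μ₁

/-- The variance of the mixture, a quadratic polynomial in `α`. -/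
noncomputable def mixVar (μ₀ σ₀ μ₁ σ₁ α : ℝ) : ℝ :=
  (1 - α) * σ₀ ^ 2 + α * σ₁ ^ 2 + α * (1 - α) * (μ₀ - μ₁) ^ 2

/-- The one-dimensional FID from the mixture to the fixed Gaussian `N(μ,σ²)`. -/
noncomputable def fidMix (μ₀ σ₀ μ₁ σ₁ μ σ α : ℝ) : ℝ :=
  (mixMean μ₀ μ₁ α - μ) ^ 2 + mixVar μ₀ σ₀ μ₁ σ₁ α + σ ^ 2
    - 2 * σ * Real.sqrt (mixVar μ₀ σ₀ μ₁ σ₁ α)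

open Polynomial
open scoped ENNReal

instance gaussMix_finite (μ₀ σ₀ μ₁ σ₁ α : ℝ) : IsFiniteMeasure (gaussMix μ₀ σ₀ μ₁ σ₁ α) := by
  constructor
  simp only [gaussMix, Measure.add_apply, Measure.smul_apply, smul_eq_mul, measure_univ, mul_one]
  exact ENNReal.add_lt_top.mpr ⟨ENNReal.ofReal_lt_top, ENNReal.ofReal_lt_top⟩

/-- Select one of the two Gaussian components. -/
noncomputable def gSel (μ₀ σ₀ μ₁ σ₁ : ℝ) : Bool → Measure ℝ
  | false => gaussianReal μ₀ (σ₀ ^ 2).toNNReal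
  | true => gaussianReal μ₁ (σ₁ ^ 2).toNNReal

instance gSel_prob (μ₀ σ₀ μ₁ σ₁ : ℝ) (b : Bool) :
    IsProbabilityMeasure (gSel μ₀ σ₀ μ₁ σ₁ b) := by
  cases b <;> simp only [gSel] <;> infer_instance

/-- Mixture weight of a component. -/
noncomputable def wSel (α : ℝ) : Bool → ℝ≥0∞
  | false => ENNReal.ofReal (1 - α)
  | true => ENNReal.ofReal α

lemma gaussMix_apply (μ₀ σ₀ μ₁ σ₁ α : ℝ) (t : Set ℝ) :
    gaussMix μ₀ σ₀ μ₁ σ₁ α t = ∑ b : Bool, wSel α b * gSel μ₀ σ₀ μ₁ σ₁ b t := by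
  simp [gaussMix, Measure.add_apply, Measure.smul_apply, Fintype.sum_bool, gSel, wSel, add_comm]

/-- The product of mixtures decomposes as a mixture of products. -/
lemma gaussMix_pi_eq (μ₀ σ₀ μ₁ σ₁ α : ℝ) (n : ℕ) :
    Measure.pi (fun _ : Fin n => gaussMix μ₀ σ₀ μ₁ σ₁ α)
      = ∑ s : Fin n → Bool,
          (∏ i, wSel α (s i)) • Measure.pi (fun i => gSel μ₀ σ₀ μ₁ σ₁ (s i)) := by
  refine Measure.pi_eq fun t ht => ?_
  rw [Measure.finset_sum_apply]
  calc (∑ s : Fin n → Bool, ((∏ i, wSel α (s i)) • Measure.pi fun i => gSel μ₀ σ₀ μ₁ σ₁ (s i))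
          (Set.univ.pi t))
      = ∑ s : Fin n → Bool, ∏ i, (wSel α (s i) * gSel μ₀ σ₀ μ₁ σ₁ (s i) (t i)) := by
        refine Finset.sum_congr rfl fun s _ => ?_
        rw [Measure.smul_apply, smul_eq_mul, Measure.pi_pi, ← Finset.prod_mul_distrib]
    _ = ∏ i, ∑ b : Bool, wSel α b * gSel μ₀ σ₀ μ₁ σ₁ b (t i) := by
        rw [Finset.prod_univ_sum, Fintype.piFinset_univ]
    _ = ∏ i, gaussMix μ₀ σ₀ μ₁ σ₁ α (t i) := by
        exact Finset.prod_congr rfl fun i _ => (gaussMix_apply μ₀ σ₀ μ₁ σ₁ α (t i)).symm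

lemma wSel_ne_top (α : ℝ) (b : Bool) : wSel α b ≠ ⊤ := by
  cases b <;> simp [wSel]

/-- The expectation of any integrable statistic under the product of mixtures is a polynomial
function of the mixing weight on `[0,1]`. -/
lemma integral_gaussMix_pi_poly (μ₀ σ₀ μ₁ σ₁ : ℝ) (n : ℕ) (f : (Fin n → ℝ) → ℝ)
    (hInt : ∀ α ∈ Set.Icc (0 : ℝ) 1,
      Integrable f (Measure.pi fun _ : Fin n => gaussMix μ₀ σ₀ μ₁ σ₁ α)) :
    ∃ p : ℝ[X], ∀ α ∈ Set.Icc (0 : ℝ) 1,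
      (∫ x, f x ∂(Measure.pi fun _ : Fin n => gaussMix μ₀ σ₀ μ₁ σ₁ α)) = p.eval α := by
  set π : (Fin n → Bool) → Measure (Fin n → ℝ) :=
    fun s => Measure.pi (fun i => gSel μ₀ σ₀ μ₁ σ₁ (s i)) with hπ
  have hIntπ : ∀ s : Fin n → Bool, Integrable f (π s) := by
    intro s
    have h2 := hInt (1/2) (by norm_num)
    rw [gaussMix_pi_eq] at h2
    have hcoef : (∏ i : Fin n, wSel (1/2 : ℝ) (s i)) = ENNReal.ofReal (1/2) ^ n := by
      rw [Finset.prod_congr rfl (fun i _ => ?_), Finset.prod_const, Finset.card_univ,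
        Fintype.card_fin]
      cases s i <;> norm_num [wSel]
    have hle : (∏ i : Fin n, wSel (1/2 : ℝ) (s i)) • π s
        ≤ ∑ s' : Fin n → Bool, (∏ i, wSel (1/2 : ℝ) (s' i)) • π s' := by
      refine Measure.le_iff.mpr fun t ht => ?_
      rw [Measure.finset_sum_apply]
      exact Finset.single_le_sum (f := fun s' => ((∏ i, wSel (1/2 : ℝ) (s' i)) • π s') t)
        (fun _ _ => zero_le) (Finset.mem_univ s)
    have h3 : Integrable f ((∏ i : Fin n, wSel (1/2 : ℝ) (s i)) • π s) :=
      h2.mono_measure hle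
    rw [hcoef] at h3
    rwa [integrable_smul_measure (pow_ne_zero _ (by norm_num)) (by simp)] at h3
  refine ⟨∑ s : Fin n → Bool, C (∫ x, f x ∂(π s)) * ∏ i, (if s i then X else 1 - X), ?_⟩
  intro α hα
  rw [gaussMix_pi_eq]
  rw [integral_finset_sum_measure (fun s _ =>
    (hIntπ s).smul_measure (ENNReal.prod_ne_top (fun i _ => wSel_ne_top α (s i))))]
  simp only [integral_smul_measure, eval_finset_sum, eval_mul, eval_C, eval_prod]
  refine Finset.sum_congr rfl fun s _ => ?_
  rw [ENNReal.toReal_prod, smul_eq_mul, mul_comm]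
  congr 1
  refine Finset.prod_congr rfl fun i _ => ?_
  cases hsi : s i <;>
    simp [wSel, ENNReal.toReal_ofReal, hα.1, hα.2, sub_nonneg.mpr hα.2]

/-- The FID as a function of the mixing weight is not polynomial on `[0,1]`. -/
lemma fid_not_poly (μ₀ σ₀ μ₁ σ₁ μ σ : ℝ) (hσ₀ : 0 < σ₀) (hσ₁ : 0 < σ₁) (hσ : 0 < σ)
    (hne : (μ₀, σ₀ ^ 2) ≠ (μ₁, σ₁ ^ 2)) :
    ¬ ∃ p : ℝ[X], ∀ α ∈ Set.Icc (0 : ℝ) 1, fidMix μ₀ σ₀ μ₁ σ₁ μ σ α = p.eval α := by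
  rintro ⟨p, hp⟩
  set V : ℝ[X] := C (-(μ₀ - μ₁) ^ 2) * X ^ 2 + C (σ₁ ^ 2 - σ₀ ^ 2 + (μ₀ - μ₁) ^ 2) * X
      + C (σ₀ ^ 2) with hVdef
  have hV : ∀ α : ℝ, V.eval α = mixVar μ₀ σ₀ μ₁ σ₁ α := by
    intro α; simp [hVdef, mixVar]; ring
  set Q : ℝ[X] := (C μ₀ + C (μ₁ - μ₀) * X - C μ) ^ 2 + V + C (σ ^ 2) with hQdef
  set r : ℝ[X] := Q - p with hrdef
  have hvnonneg : ∀ α ∈ Set.Icc (0 : ℝ) 1, 0 ≤ mixVar μ₀ σ₀ μ₁ σ₁ α := by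
    intro α hα
    have h1 : (0:ℝ) ≤ 1 - α := by linarith [hα.2]
    have h2 : (0:ℝ) ≤ α := hα.1
    unfold mixVar; positivity
  have hr : ∀ α ∈ Set.Icc (0 : ℝ) 1,
      r.eval α = 2 * σ * Real.sqrt (mixVar μ₀ σ₀ μ₁ σ₁ α) := by
    intro α hα
    have h := hp α hα
    have hQe : Q.eval α = (mixMean μ₀ μ₁ α - μ) ^ 2 + mixVar μ₀ σ₀ μ₁ σ₁ α + σ ^ 2 := by
      simp [hQdef, hV, mixMean]; ring
    simp only [hrdef, eval_sub, hQe, ← h, fidMix]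
    ring
  have hsq : r ^ 2 = C (4 * σ ^ 2) * V := by
    apply Polynomial.eq_of_infinite_eval_eq
    refine Set.Infinite.mono ?_ (Set.Icc_infinite (by norm_num : (0:ℝ) < 1))
    intro α hα
    have h1 := hr α hα
    have h2 := hvnonneg α hα
    simp only [Set.mem_setOf_eq, eval_pow, eval_mul, eval_C, h1, hV]
    rw [mul_pow, mul_pow, Real.sq_sqrt h2]
    ring
  have hV0 : V.eval 0 = σ₀ ^ 2 := by rw [hV]; simp [mixVar]
  have hrne : r ≠ 0 := by
    intro h
    have := congrArg (eval 0) hsq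
    rw [h] at this
    simp only [eval_pow, eval_zero, eval_mul, eval_C, hV0] at this
    nlinarith [this, mul_pos (mul_pos (by norm_num : (0:ℝ) < 4) (pow_pos hσ 2)) (pow_pos hσ₀ 2)]
  have hdeg : (r ^ 2).natDegree = 2 * r.natDegree := Polynomial.natDegree_pow r 2
  have h4σ : (4 * σ ^ 2 : ℝ) ≠ 0 := by positivity
  by_cases hμ : μ₀ = μ₁
  · -- linear case
    have hσne : σ₁ ^ 2 - σ₀ ^ 2 ≠ 0 := by
      intro h
      apply hne
      rw [Prod.mk.injEq]
      exact ⟨hμ, by linarith⟩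
    have hVlin : V = C (σ₁ ^ 2 - σ₀ ^ 2) * X + C (σ₀ ^ 2) := by
      rw [hVdef, hμ]; simp
    have : (C (4 * σ ^ 2) * V).natDegree = 1 := by
      rw [Polynomial.natDegree_C_mul h4σ, hVlin, Polynomial.natDegree_linear hσne]
    rw [hsq, this] at hdeg
    omega
  · -- quadratic case
    have hμne : μ₀ - μ₁ ≠ 0 := sub_ne_zero.mpr hμ
    have hc2 : (-(μ₀ - μ₁) ^ 2 : ℝ) ≠ 0 := neg_ne_zero.mpr (pow_ne_zero 2 hμne)
    have hVdeg : (C (4 * σ ^ 2) * V).natDegree = 2 := by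
      rw [Polynomial.natDegree_C_mul h4σ, hVdef, Polynomial.natDegree_quadratic hc2]
    have hVc2 : V.coeff 2 = -(μ₀ - μ₁) ^ 2 := by
      simp only [hVdef, Polynomial.coeff_add, Polynomial.coeff_C_mul, Polynomial.coeff_X_pow,
        Polynomial.coeff_C, Polynomial.coeff_X]
      norm_num
    have h1 : (r ^ 2).leadingCoeff = r.leadingCoeff ^ 2 := Polynomial.leadingCoeff_pow r 2
    rw [hsq, Polynomial.leadingCoeff, hVdeg, Polynomial.coeff_C_mul, hVc2] at h1
    have hx2 : (0:ℝ) < (μ₀ - μ₁) ^ 2 :=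
      lt_of_le_of_ne (sq_nonneg _) (Ne.symm (pow_ne_zero 2 hμne))
    have hpos : (0:ℝ) < 4 * σ ^ 2 * (μ₀ - μ₁) ^ 2 :=
      mul_pos (by positivity) hx2
    nlinarith [sq_nonneg r.leadingCoeff, h1, hpos]

/-- No unbiased estimator of the one-dimensional FID to a fixed Gaussian exists on classes
containing all two-component Gaussian mixtures of two distinct Gaussians. -/
theorem no_unbiased_fid_estimator
    (μ₀ σ₀ μ₁ σ₁ μ σ : ℝ) (hσ₀ : 0 < σ₀) (hσ₁ : 0 < σ₁) (hσ : 0 < σ)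
    (hne : (μ₀, σ₀ ^ 2) ≠ (μ₁, σ₁ ^ 2)) (n : ℕ) :
    ¬ ∃ Dhat : (Fin n → ℝ) → ℝ, Measurable Dhat
        ∧ (∀ α ∈ Set.Icc (0 : ℝ) 1,
            Integrable Dhat (Measure.pi fun _ : Fin n => gaussMix μ₀ σ₀ μ₁ σ₁ α))
        ∧ ∀ α ∈ Set.Icc (0 : ℝ) 1,
            (∫ x, Dhat x ∂(Measure.pi fun _ : Fin n => gaussMix μ₀ σ₀ μ₁ σ₁ α))
              = fidMix μ₀ σ₀ μ₁ σ₁ μ σ α := by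
  rintro ⟨Dhat, _hm, hInt, hEq⟩
  obtain ⟨p, hp⟩ := integral_gaussMix_pi_poly μ₀ σ₀ μ₁ σ₁ n Dhat hInt
  exact fid_not_poly μ₀ σ₀ μ₁ σ₁ μ σ hσ₀ hσ₁ hσ hne
    ⟨p, fun α hα => (hEq α hα).symm.trans (hp α hα)⟩
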